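/- Let K ≥ 3 and d ≥ 1, let (P_ul, G_ul) be a likelihood model with R(P_ul, G_ul) ⊆ {p : ℝ^d → Δ̂_{K-1}^∅}, let G_K = {g : ℝ^d → ℝ^K}, and for r ∈ [0,1] define P_maul,r(y; (g_1(x), g_2(x))) = (1−r)·P_ul(y; g_1(x)) + r·P_sl(y; g_2(x)) over G_ul,K = {(g_1, g_2) : g_1 ∈ G_ul, g_2 ∈ G_K}. Then the representation ability is monotone in the mixture rate: if 0 ≤ r_1 ≤ r_2 ≤ 1 then R(P_maul,r_1, G_ul,K) ⊆ R(P_maul,r_2, G_ul,K). -/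

import Mathlib

open scoped BigOperators

noncomputable section

/-- The probability simplex Δ_{K-1} ⊆ ℝ^K. -/
def simplex (K : ℕ) : Set (Fin K → ℝ) :=
  {p | (∑ k, p k) = 1 ∧ ∀ k, 0 ≤ p k ∧ p k ≤ 1}

/-- A PMF (vector) is unimodal: there is a mode M such that p is
nondecreasing up to M and nonincreasing after M. -/
def Unimodal {K : ℕ} (p : Fin K → ℝ) : Prop :=
  ∃ M : Fin K, (∀ k, p k ≤ p M) ∧
    (∀ i j : Fin K, i ≤ j → j ≤ M → p i ≤ p j) ∧
    (∀ i j : Fin K, M ≤ i → i ≤ j → p j ≤ p i)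

/-- Δ̂_{K-1}: the set of unimodal PMFs. -/
def uniSimplex (K : ℕ) : Set (Fin K → ℝ) :=
  {p | p ∈ simplex K ∧ Unimodal p}

/-- The stereotype logit (SL) link function. -/
def Psl {K : ℕ} (u : Fin K → ℝ) (y : Fin K) : ℝ :=
  Real.exp (-(u y)) / ∑ k, Real.exp (-(u k))

/-- The ordering transform ρ[u]: (ρ[u])_1 = u_1, (ρ[u])_k = (ρ[u])_{k-1} + ρ(u_k). -/
def ordT (ρ : ℝ → ℝ) {K : ℕ} (u : Fin K → ℝ) : Fin K → ℝ :=
  fun k => u ⟨0, k.pos⟩ +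
    ∑ j ∈ Finset.univ.filter (fun j : Fin K => 0 < (j : ℕ) ∧ (j : ℕ) ≤ (k : ℕ)), ρ (u j)

/-- The Euclidean norm on ℝ^K. -/
def euclNorm {K : ℕ} (u : Fin K → ℝ) : ℝ :=
  Real.sqrt (∑ k, (u k) ^ 2)

/-- Euclidean distance from a point to a set. -/
def DH {K : ℕ} (u : Fin K → ℝ) (S : Set (Fin K → ℝ)) : ℝ :=
  sInf ((fun v => euclNorm (u - v)) '' S)

lemma Psl_pos {K : ℕ} (hK : 0 < K) (u : Fin K → ℝ) (y : Fin K) : 0 < Psl u y := by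
  unfold Psl
  have : 0 < ∑ k, Real.exp (-(u k)) :=
    Finset.sum_pos (fun k _ => Real.exp_pos _) ⟨⟨0, hK⟩, Finset.mem_univ _⟩
  exact div_pos (Real.exp_pos _) this

lemma Psl_sum {K : ℕ} (hK : 0 < K) (u : Fin K → ℝ) : (∑ y, Psl u y) = 1 := by
  unfold Psl
  rw [← Finset.sum_div]
  have : 0 < ∑ k, Real.exp (-(u k)) :=
    Finset.sum_pos (fun k _ => Real.exp_pos _) ⟨⟨0, hK⟩, Finset.mem_univ _⟩
  field_simp

/-- the representation ability of the mixture model P_maul,r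
is monotone in the mixture rate r. -/
theorem stmt10 (K d : ℕ) (hK : 3 ≤ K) (hd : 1 ≤ d)
    {α : Type*} (Pul : α → Fin K → ℝ) (Gul : Set ((Fin d → ℝ) → α))
    (hrep : ∀ g ∈ Gul, ∀ x : Fin d → ℝ,
      (fun y => Pul (g x) y) ∈ uniSimplex K ∧ ∀ y, Pul (g x) y ≠ 0)
    (r₁ r₂ : ℝ) (hr0 : 0 ≤ r₁) (hr12 : r₁ ≤ r₂) (hr1 : r₂ ≤ 1) :
    {P : (Fin d → ℝ) → Fin K → ℝ |
        ∃ g1 ∈ Gul, ∃ g2 : (Fin d → ℝ) → Fin K → ℝ,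
          ∀ x y, P x y = (1 - r₁) * Pul (g1 x) y + r₁ * Psl (g2 x) y}
      ⊆ {P : (Fin d → ℝ) → Fin K → ℝ |
          ∃ g1 ∈ Gul, ∃ g2 : (Fin d → ℝ) → Fin K → ℝ,
            ∀ x y, P x y = (1 - r₂) * Pul (g1 x) y + r₂ * Psl (g2 x) y} := by
  have hKpos : 0 < K := by omega
  intro P hP
  obtain ⟨g1, hg1, g2, hPeq⟩ := hP
  by_cases hr2 : r₂ = 0
  · have hr10 : r₁ = 0 := le_antisymm (hr2 ▸ hr12) hr0
    exact ⟨g1, hg1, g2, fun x y => by rw [hPeq x y, hr10, hr2]⟩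
  · have hr2pos : 0 < r₂ := lt_of_le_of_ne (hr0.trans hr12) (Ne.symm hr2)
    -- the new PMF
    set w : (Fin d → ℝ) → Fin K → ℝ :=
      fun x y => ((r₂ - r₁) * Pul (g1 x) y + r₁ * Psl (g2 x) y) / r₂ with hw
    have hwpos : ∀ x y, 0 < w x y := by
      intro x y
      apply div_pos _ hr2pos
      have hp : 0 < Pul (g1 x) y := by
        obtain ⟨⟨⟨_, hb⟩, _⟩, hne⟩ := hrep g1 hg1 x
        exact lt_of_le_of_ne (hb y).1 (Ne.symm (hne y))
      have hs : 0 < Psl (g2 x) y := Psl_pos hKpos _ y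
      rcases eq_or_lt_of_le hr0 with h1 | h1
      · have : 0 < r₂ - r₁ := by linarith
        nlinarith
      · nlinarith [sub_nonneg.mpr hr12, mul_nonneg (sub_nonneg.mpr hr12) hp.le]
    have hwsum : ∀ x, (∑ y, w x y) = 1 := by
      intro x
      have hp1 : (∑ y, Pul (g1 x) y) = 1 := (hrep g1 hg1 x).1.1.1
      have hs1 : (∑ y, Psl (g2 x) y) = 1 := Psl_sum hKpos _
      simp only [hw]
      rw [← Finset.sum_div, Finset.sum_add_distrib, ← Finset.mul_sum, ← Finset.mul_sum,
        hp1, hs1]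
      field_simp
      ring
    refine ⟨g1, hg1, fun x y => -Real.log (w x y), fun x y => ?_⟩
    have hPsl : Psl (fun y => -Real.log (w x y)) y = w x y := by
      unfold Psl
      have he : ∀ k, Real.exp (-(-Real.log (w x k))) = w x k := by
        intro k; rw [neg_neg, Real.exp_log (hwpos x k)]
      simp only [he, hwsum x, div_one]
    rw [hPeq x y, hPsl, hw]
    field_simp
    ring
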